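/- Let a and b be relatively prime positive integers and k ≥ 1. Then there are infinitely many n such that a*n+b is a product of exactly k primes (counted with multiplicity). -/

import Mathlib

theorem infinitely_many_k_composites (a b : ℕ) (ha : 0 < a) (hb : 0 < b)
    (hab : Nat.Coprime a b) (k : ℕ) (hk : 1 ≤ k) :
    ∀ N : ℕ, ∃ n : ℕ, N < n ∧ ∃ l : List ℕ, l.length = k ∧
      (∀ p ∈ l, Nat.Prime p) ∧ a * n + b = l.prod := by
  intro N
  haveI : NeZero a := ⟨ha.ne'⟩
  have hbu : IsUnit ((b : ZMod a)) := (ZMod.isUnit_iff_coprime b a).mpr hab.symm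
  obtain ⟨q, hq1, hqp, hqmod⟩ :=
    Nat.forall_exists_prime_gt_and_eq_mod (q := a) (a := (1 : ZMod a)) isUnit_one 1
  obtain ⟨p, hpN, hpp, hpmod⟩ :=
    Nat.forall_exists_prime_gt_and_eq_mod (q := a) hbu (a * N + b)
  set M := p * q ^ (k - 1) with hMdef
  have hqpow : 1 ≤ q ^ (k - 1) := Nat.one_le_pow _ _ hqp.pos
  have hM : a * N + b < M := lt_of_lt_of_le hpN (Nat.le_mul_of_pos_right p hqpow)
  have hmod : (M : ZMod a) = (b : ZMod a) := by
    rw [hMdef]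
    push_cast
    rw [hpmod, hqmod]
    simp
  have hmodeq : M ≡ b [MOD a] := (ZMod.natCast_eq_natCast_iff _ _ _).mp hmod
  have hble : b ≤ M := le_of_lt (lt_of_le_of_lt (Nat.le_add_left _ _) hM)
  have hdvd : a ∣ M - b := (Nat.modEq_iff_dvd' hble).mp hmodeq.symm
  obtain ⟨n, hn⟩ := hdvd
  have hMn : a * n + b = M := by omega
  refine ⟨n, ?_, p :: List.replicate (k - 1) q, ?_, ?_, ?_⟩
  · have h2 : a * N < a * n := by omega
    exact Nat.lt_of_mul_lt_mul_left h2
  · simp [List.length_replicate]; omega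
  · intro r hr
    rcases List.mem_cons.mp hr with h | h
    · exact h ▸ hpp
    · exact (List.eq_of_mem_replicate h) ▸ hqp
  · simp [List.prod_cons, List.prod_replicate, hMn]; exact hMdef
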